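/- In a periodic motorized parallel chip-firing game on a finite connected graph (with every motor's firing sequence periodic), every vertex fires the same number of times per period: for all vertices v, w, Σ_{t=0}^{p−1} f(v,t) = Σ_{t=0}^{p−1} f(w,t). -/
import Mathlib


open Finset

/-- A motorized parallel chip-firing game on `G` with motor set `M`: chip counts
are integers (motors may go negative); every vertex either fires (`f t v = 1`) or
waits (`f t v = 0`); non-motor vertices fire exactly when they have at least as
many chips as their degree; chips evolve by the parallel chip-firing update rule. -/
def MotorizedGame {V : Type*} [Fintype V] (G : SimpleGraph V) [DecidableRel G.Adj]
    (M : Set V) (c : ℕ → V → ℤ) (f : ℕ → V → ℕ) : Prop :=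
  (∀ t v, f t v = 0 ∨ f t v = 1) ∧
  (∀ t v, v ∉ M → f t v = if (G.degree v : ℤ) ≤ c t v then 1 else 0) ∧
  (∀ t v, c (t + 1) v
      = c t v + ∑ w ∈ G.neighborFinset v, (f t w : ℤ) - (f t v : ℤ) * G.degree v)

/-- In a periodic motorized game on a finite connected graph, every vertex fires
the same number of times per period. -/
theorem motorized_equal_firing_counts {V : Type*} [Fintype V] (G : SimpleGraph V)
    [DecidableRel G.Adj] (hconn : G.Connected) (M : Set V) (hM : M.Nonempty)
    (c : ℕ → V → ℤ) (f : ℕ → V → ℕ) (hgame : MotorizedGame G M c f)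
    (p : ℕ) (hp : 0 < p)
    (hperc : ∀ t v, c (t + p) v = c t v) (hperf : ∀ t v, f (t + p) v = f t v)
    (v w : V) :
    ∑ t ∈ range p, f t v = ∑ t ∈ range p, f t w := by
  classical
  obtain ⟨hf01, hfire, hupd⟩ := hgame
  set S : V → ℕ := fun u => ∑ t ∈ range p, f t u with hSdef
  -- harmonicity
  have harm : ∀ u, S u * G.degree u = ∑ x ∈ G.neighborFinset u, S x := by
    intro u
    have h0 : c p u = c 0 u := by simpa using hperc 0 u
    have h1 : ∀ t, ((∑ x ∈ G.neighborFinset u, (f t x : ℤ)) - (f t u : ℤ) * G.degree u)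
        = c (t + 1) u - c t u := by
      intro t; rw [hupd t u]; ring
    have key : ∑ t ∈ range p,
        ((∑ x ∈ G.neighborFinset u, (f t x : ℤ)) - (f t u : ℤ) * G.degree u) = 0 := by
      rw [Finset.sum_congr rfl (fun t _ => h1 t),
        Finset.sum_range_sub (fun t => c t u), h0, sub_self]
    rw [Finset.sum_sub_distrib, Finset.sum_comm, ← Finset.sum_mul, sub_eq_zero] at key
    have : ((S u : ℤ)) * G.degree u = ∑ x ∈ G.neighborFinset u, (S x : ℤ) := by
      rw [hSdef]; push_cast
      exact key.symm
    exact_mod_cast this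
  -- pick a maximizer
  obtain ⟨v0, -, hmax⟩ := Finset.exists_max_image (univ : Finset V) S ⟨v, mem_univ v⟩
  have hmax' : ∀ u, S u ≤ S v0 := fun u => hmax u (mem_univ u)
  -- step: equality propagates to neighbors
  have step : ∀ u x, S u = S v0 → G.Adj u x → S x = S v0 := by
    intro u x hu hadj
    by_contra hne
    have hx : S x < S v0 := lt_of_le_of_ne (hmax' x) hne
    have hlt : ∑ y ∈ G.neighborFinset u, S y < ∑ _y ∈ G.neighborFinset u, S v0 :=
      Finset.sum_lt_sum (fun y _ => hmax' y)
        ⟨x, by rwa [SimpleGraph.mem_neighborFinset], hx⟩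
    rw [Finset.sum_const, smul_eq_mul, SimpleGraph.card_neighborFinset_eq_degree] at hlt
    rw [← harm, hu, mul_comm] at hlt
    exact lt_irrefl _ hlt
  -- propagate along walks
  have all : ∀ {a b : V} (q : G.Walk a b), S a = S v0 → S b = S v0 := by
    intro a b q
    induction q with
    | nil => exact id
    | cons hadj q ih => exact fun ha => ih (step _ _ ha hadj)
  obtain ⟨qv⟩ := hconn v0 v
  obtain ⟨qw⟩ := hconn v0 w
  have hv : S v = S v0 := all qv rfl
  have hw : S w = S v0 := all qw rfl
  show S v = S w
  rw [hv, hw]
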